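/- arXiv:1701.01478 — 3 statements merged into one kernel-verified Lean document; each statement's English description precedes it below -/
import Mathlib

section
/- Let A, B be convex subsets of a Banach space X, r ≠ s reals, ψ as above, K > 0, and φ_K = (−K‖·‖) * ψ the sup-convolution. Let x̄ ∈ X and suppose there exists c > 0 such that the sets U = {z ∈ [A,B] : ψ(z) − K‖z − x̄‖ > φ_K(x̄) − c} and V = {z ∈ [A,B] : |s − ψ(z)| < c} are disjoint. If p is a superdifferential of φ_K at x̄ (p(h) ≥ φ_K(x̄+h) − φ_K(x̄) for all h), then inf_B p − inf_A p ≥ s − r. -/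
open Set

set_option maxHeartbeats 1600000 in
/-- Proposition 3 (main part): if the sets `U` and `V` are disjoint and `p` is a
superdifferential of `φ_K` at `x̄`, then `inf_B p - inf_A p ≥ s - r`. -/
theorem phiK_superdiff_mvi
    {X : Type*} [NormedAddCommGroup X] [NormedSpace ℝ X] [CompleteSpace X]
    (A B : Set X) (hA : Convex ℝ A) (hB : Convex ℝ B)
    (hAb : Bornology.IsBounded A) (hBb : Bornology.IsBounded B)
    (hAne : A.Nonempty) (hBne : B.Nonempty)
    (r s : ℝ) (hrs : r ≠ s)
    (ψ : X → EReal)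
    (hψ : {q : X × ℝ | (q.2 : EReal) ≤ ψ q.1} =
      convexHull ℝ ((A ×ˢ Iic r) ∪ (B ×ˢ Iic s)))
    (K : ℝ) (hK : 0 < K)
    (φ : X → ℝ)
    (hφ : ∀ x, (φ x : EReal) = ⨆ y : X, ψ y - ((K * ‖x - y‖ : ℝ) : EReal))
    (xbar : X) (c : ℝ) (hc : 0 < c)
    (hUV : Disjoint
      {z ∈ convexHull ℝ (A ∪ B) | ((φ xbar - c : ℝ) : EReal) < ψ z - ((K * ‖z - xbar‖ : ℝ) : EReal)}
      {z ∈ convexHull ℝ (A ∪ B) | ((s - c : ℝ) : EReal) < ψ z ∧ ψ z < ((s + c : ℝ) : EReal)})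
    (p : X →L[ℝ] ℝ)
    (hp : ∀ h : X, φ (xbar + h) - φ xbar ≤ p h) :
    s - r ≤ sInf (p '' B) - sInf (p '' A) := by
  classical
  set C := convexHull ℝ (A ∪ B) with hCdef
  set S := convexHull ℝ ((A ×ˢ Iic r) ∪ (B ×ˢ Iic s)) with hSdef
  clear_value C S
  have hCsup : A ∪ B ⊆ C := hCdef ▸ subset_convexHull ℝ _
  have hCconv : Convex ℝ C := hCdef ▸ convex_convexHull ℝ _
  have hSsup : (A ×ˢ Iic r) ∪ (B ×ˢ Iic s) ⊆ S := hSdef ▸ subset_convexHull ℝ _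
  have hSconv : Convex ℝ S := hSdef ▸ convex_convexHull ℝ _
  have hmem : ∀ (z : X) (m : ℝ), (m : EReal) ≤ ψ z ↔ (z, m) ∈ S := by
    intro z m
    constructor
    · intro h
      have : (z, m) ∈ {q : X × ℝ | (q.2 : EReal) ≤ ψ q.1} := h
      rwa [hψ] at this
    · intro h
      have h' : (z, m) ∈ {q : X × ℝ | (q.2 : EReal) ≤ ψ q.1} := by rw [hψ]; exact h
      exact h'
  -- S is contained in C ×ˢ Iic (max r s)
  have hSsub : S ⊆ C ×ˢ Iic (max r s) := by
    rw [hSdef]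
    apply convexHull_min
    · rintro ⟨x, m⟩ (⟨hx, hm⟩ | ⟨hx, hm⟩)
      · exact ⟨hCsup (Or.inl hx),
          mem_Iic.mpr (le_trans (mem_Iic.mp hm) (le_max_left r s))⟩
      · exact ⟨hCsup (Or.inr hx),
          mem_Iic.mpr (le_trans (mem_Iic.mp hm) (le_max_right r s))⟩
    · exact hCconv.prod (convex_Iic _)
  -- upper bound for ψ
  have hub : ∀ z : X, ψ z ≤ ((max r s : ℝ) : EReal) := by
    intro z
    by_contra h
    push_neg at h
    obtain ⟨m, hm1, hm2⟩ := EReal.exists_between_coe_real h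
    have hm3 : m ≤ max r s := (hSsub ((hmem z m).mp hm2.le)).2
    exact (EReal.coe_lt_coe_iff.mp hm1).not_ge hm3
  have hrA : ∀ a ∈ A, (r : EReal) ≤ ψ a := fun a ha =>
    (hmem a r).mpr (hSsup (Or.inl ⟨ha, mem_Iic.mpr le_rfl⟩))
  have hsB : ∀ b ∈ B, (s : EReal) ≤ ψ b := fun b hb =>
    (hmem b s).mpr (hSsup (Or.inr ⟨hb, mem_Iic.mpr le_rfl⟩))
  -- lower bound for ψ on C
  have hlb : ∀ z ∈ C, ((min r s : ℝ) : EReal) ≤ ψ z := by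
    intro z hz
    apply (hmem z (min r s)).mpr
    have h1 : C ×ˢ ({min r s} : Set ℝ) ⊆ S := by
      have h2 : (A ∪ B) ×ˢ ({min r s} : Set ℝ) ⊆ (A ×ˢ Iic r) ∪ (B ×ˢ Iic s) := by
        rintro ⟨x, m⟩ ⟨hx | hx, hm⟩
        · exact Or.inl ⟨hx, by simp at hm; simp [hm, min_le_left r s]⟩
        · exact Or.inr ⟨hx, by simp at hm; simp [hm, min_le_right r s]⟩
      calc C ×ˢ ({min r s} : Set ℝ)
          = convexHull ℝ ((A ∪ B) ×ˢ ({min r s} : Set ℝ)) := by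
            rw [convexHull_prod, convexHull_singleton, ← hCdef]
        _ ⊆ S := by rw [hSdef]; exact convexHull_mono h2
    exact h1 ⟨hz, rfl⟩
  -- representation lemma
  have hrep : ∀ (z : X) (t : ℝ), (t : EReal) ≤ ψ z →
      ∃ a ∈ A, ∃ b ∈ B, ∃ l : ℝ, 0 ≤ l ∧ l ≤ 1 ∧
        z = l • a + (1 - l) • b ∧ t ≤ l * r + (1 - l) * s := by
    intro z t ht
    have hzS : (z, t) ∈ S := (hmem z t).mp ht
    rw [hSdef, (hA.prod (convex_Iic r)).convexHull_union (hB.prod (convex_Iic s))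
      (hAne.prod nonempty_Iic) (hBne.prod nonempty_Iic), mem_convexJoin] at hzS
    obtain ⟨⟨a, r'⟩, ⟨ha, hr'⟩, ⟨b, s'⟩, ⟨hb, hs'⟩, u, v, hu, hv, huv, heq⟩ := hzS
    refine ⟨a, ha, b, hb, u, hu, by linarith, ?_, ?_⟩
    · have h1 := congrArg Prod.fst heq
      simp only [Prod.fst_add, Prod.smul_fst] at h1
      rw [← h1]
      have : v = 1 - u := by linarith
      rw [this]
    · have h2 := congrArg Prod.snd heq
      simp only [Prod.snd_add, Prod.smul_snd, smul_eq_mul] at h2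
      have hr'' : r' ≤ r := hr'
      have hs'' : s' ≤ s := hs'
      have hv' : v = 1 - u := by linarith
      have e1 : u * r' ≤ u * r := mul_le_mul_of_nonneg_left hr'' hu
      have e2 : v * s' ≤ v * s := mul_le_mul_of_nonneg_left hs'' hv
      have e3 : v * s = (1 - u) * s := by rw [hv']
      linarith
  -- φ is bounded below by each term of the sup
  have hφge : ∀ w y : X, ψ y - ((K * ‖w - y‖ : ℝ) : EReal) ≤ (φ w : EReal) := by
    intro w y
    rw [hφ w]
    exact le_iSup (fun y => ψ y - ((K * ‖w - y‖ : ℝ) : EReal)) y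
  -- BddBelow of p '' A
  obtain ⟨R, hR⟩ := isBounded_iff_forall_norm_le.mp hAb
  have hbddA : BddBelow (p '' A) := by
    refine ⟨-(‖p‖ * R), ?_⟩
    rintro _ ⟨a, ha, rfl⟩
    have h1 : ‖p a‖ ≤ ‖p‖ * ‖a‖ := p.le_opNorm a
    have h2 : ‖a‖ ≤ R := hR a ha
    have h3 : ‖p‖ * ‖a‖ ≤ ‖p‖ * R := by
      apply mul_le_mul_of_nonneg_left h2 (norm_nonneg p)
    have := abs_le.mp (le_trans (le_of_eq (Real.norm_eq_abs (p a)).symm) (le_trans h1 h3))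
    linarith [this.1]
  -- main estimate, for every δ > 0
  have key : ∀ δ : ℝ, 0 < δ → s - r ≤ sInf (p '' B) - sInf (p '' A) + δ := by
    intro δ hδ
    have habs : 0 < |s - r| := abs_pos.mpr (sub_ne_zero.mpr (Ne.symm hrs))
    set D : ℝ := 2 + 4 * |s - r| / c with hDdef
    have hD : 0 < D := by positivity
    set ε : ℝ := min (c / 2) (δ / D) with hεdef
    clear_value D ε
    have hε : 0 < ε := by rw [hεdef]; exact lt_min (by linarith) (by positivity)
    have hεc2 : ε ≤ c / 2 := by rw [hεdef]; exact min_le_left _ _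
    have hεc : ε < c := by linarith
    have hεD : ε * D ≤ δ := by
      have : ε ≤ δ / D := by rw [hεdef]; exact min_le_right _ _
      calc ε * D ≤ (δ / D) * D := mul_le_mul_of_nonneg_right this hD.le
        _ = δ := div_mul_cancel₀ δ hD.ne'
    -- get a near maximizer z
    have hlt : ((φ xbar - ε : ℝ) : EReal) < ⨆ y : X, ψ y - ((K * ‖xbar - y‖ : ℝ) : EReal) := by
      rw [← hφ xbar]
      exact_mod_cast sub_lt_self (φ xbar) hε
    rw [lt_iSup_iff] at hlt
    obtain ⟨z, hz⟩ := hlt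
    -- ψ z is a real number
    have hzne_bot : ψ z ≠ ⊥ := by
      intro h
      rw [h, EReal.bot_sub] at hz
      exact (not_lt_bot hz)
    have hzne_top : ψ z ≠ ⊤ := (lt_of_le_of_lt (hub z) (EReal.coe_lt_top _)).ne
    set v : ℝ := (ψ z).toReal with hvdef
    clear_value v
    have hv : (v : EReal) = ψ z := by rw [hvdef]; exact EReal.coe_toReal hzne_top hzne_bot
    -- key inequality in ℝ
    have hK1 : φ xbar - ε < v - K * ‖xbar - z‖ := by
      have h' : ((φ xbar - ε : ℝ) : EReal) < ((v - K * ‖xbar - z‖ : ℝ) : EReal) := by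
        rw [show ((v - K * ‖xbar - z‖ : ℝ) : EReal)
            = (v : EReal) - ((K * ‖xbar - z‖ : ℝ) : EReal) from EReal.coe_sub _ _, hv]
        exact hz
      exact EReal.coe_lt_coe_iff.mp h'
    -- z ∈ C
    have hzC : z ∈ C := (hSsub ((hmem z v).mp hv.le)).1
    have hvmax : v ≤ max r s := by
      have := hub z
      rw [← hv, EReal.coe_le_coe_iff] at this
      exact this
    have hvmin : min r s ≤ v := by
      have := hlb z hzC
      rw [← hv, EReal.coe_le_coe_iff] at this
      exact this
    -- z belongs to the first set, hence not to the second
    have hzU : z ∈ {z ∈ C | ((φ xbar - c : ℝ) : EReal) <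
        ψ z - ((K * ‖z - xbar‖ : ℝ) : EReal)} := by
      refine ⟨hzC, ?_⟩
      rw [norm_sub_rev]
      refine lt_of_le_of_lt ?_ hz
      exact_mod_cast (by linarith : φ xbar - c ≤ φ xbar - ε)
    have hzV : z ∉ {z ∈ C | ((s - c : ℝ) : EReal) < ψ z ∧ ψ z < ((s + c : ℝ) : EReal)} :=
      Set.disjoint_left.mp hUV hzU
    have hnotV : ¬(s - c < v ∧ v < s + c) := by
      intro ⟨h1, h2⟩
      exact hzV ⟨hzC, by rw [← hv]; exact_mod_cast h1, by rw [← hv]; exact_mod_cast h2⟩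
    -- get near optimal representation
    obtain ⟨a₀, ha₀, b₀, hb₀, l, hl0, hl1, hzrep, hval⟩ := hrep z (v - ε) (by
      rw [← hv]; exact_mod_cast sub_le_self v hε.le)
    -- the representation value is at most v
    have hcombo : l * r + (1 - l) * s ≤ v := by
      have hmemS : (z, l * r + (1 - l) * s) ∈ S := by
        have h1 : (a₀, r) ∈ S := hSsup (Or.inl ⟨ha₀, mem_Iic.mpr le_rfl⟩)
        have h2 : (b₀, s) ∈ S := hSsup (Or.inr ⟨hb₀, mem_Iic.mpr le_rfl⟩)
        have h3 := hSconv h1 h2 hl0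
          (by linarith : (0:ℝ) ≤ 1 - l) (by ring)
        have h4 : l • ((a₀, r) : X × ℝ) + (1 - l) • ((b₀, s) : X × ℝ)
            = (z, l * r + (1 - l) * s) := by
          rw [Prod.ext_iff]
          constructor
          · simp [hzrep]
          · simp [smul_eq_mul]
        rwa [h4] at h3
      have := (hmem z _).mpr hmemS
      rw [← hv, EReal.coe_le_coe_iff] at this
      exact this
    -- lower bound on l
    set l₀ : ℝ := c / (2 * |s - r|) with hl₀def
    clear_value l₀
    have hl₀pos : 0 < l₀ := by rw [hl₀def]; positivity
    have hll₀ : l₀ ≤ l := by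
      rcases lt_or_gt_of_ne hrs with hsr | hsr
      · -- r < s : max = s, so v ≤ s, hence v ≤ s - c
        have hvs : v ≤ s := le_trans hvmax (by rw [max_le_iff]; exact ⟨le_of_lt hsr, le_rfl⟩)
        have hvc : v ≤ s - c := by
          by_contra h
          push_neg at h
          exact hnotV ⟨by linarith, by linarith⟩
        have habs' : |s - r| = s - r := abs_of_pos (by linarith)
        rw [hl₀def, habs', div_le_iff₀ (by linarith : (0:ℝ) < 2 * (s - r))]
        nlinarith
      · -- s < r : min = s, so s ≤ v, hence s + c ≤ v
        have hvs : s ≤ v := le_trans (by rw [le_min_iff]; exact ⟨le_of_lt hsr, le_rfl⟩) hvmin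
        have hvc : s + c ≤ v := by
          by_contra h
          push_neg at h
          exact hnotV ⟨by linarith, by linarith⟩
        have habs' : |s - r| = r - s := by
          rw [abs_of_neg (show s - r < 0 by linarith)]; ring
        rw [hl₀def, habs', div_le_iff₀ (by linarith : (0:ℝ) < 2 * (r - s))]
        nlinarith
    have hlpos : 0 < l := lt_of_lt_of_le hl₀pos hll₀
    -- estimate (i) : for all b ∈ B, s - v - ε ≤ p (b - z)
    have hbz : ∀ b ∈ B, s - v - ε ≤ p (b - z) := by
      intro b hb
      have hwb : xbar + (b - z) - b = xbar - z := by abel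
      have h1 : ((s - K * ‖xbar - z‖ : ℝ) : EReal) ≤ (φ (xbar + (b - z)) : EReal) := by
        refine le_trans ?_ (hφge (xbar + (b - z)) b)
        rw [hwb, EReal.coe_sub]
        exact EReal.sub_le_sub (hsB b hb) le_rfl
      rw [EReal.coe_le_coe_iff] at h1
      have h2 := hp (b - z)
      have h3 : K * ‖xbar - z‖ ≤ v - φ xbar + ε := by linarith
      linarith
    -- estimate on p (b₀ - a₀)
    have hb₀z : b₀ - z = l • (b₀ - a₀) := by rw [hzrep]; module
    have hza₀ : z - a₀ = (1 - l) • (b₀ - a₀) := by rw [hzrep]; module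
    have hpb₀z : p (b₀ - z) = l * p (b₀ - a₀) := by rw [hb₀z, map_smul, smul_eq_mul]
    have hpza₀ : p (z - a₀) = (1 - l) * p (b₀ - a₀) := by rw [hza₀, map_smul, smul_eq_mul]
    have h1 : l * (s - r) - 2 * ε ≤ l * p (b₀ - a₀) := by
      have := hbz b₀ hb₀
      rw [hpb₀z] at this
      nlinarith
    set u : ℝ := 2 * ε / l with hudef
    clear_value u
    have hu0 : 0 ≤ u := by rw [hudef]; positivity
    have hP : s - r - u ≤ p (b₀ - a₀) := by
      have hul : u * l = 2 * ε := by
        rw [hudef]; exact div_mul_cancel₀ _ hlpos.ne'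
      have hmul : l * (s - r - u) ≤ l * p (b₀ - a₀) := by nlinarith [h1, hul]
      exact le_of_mul_le_mul_left hmul hlpos
    have hu1 : u ≤ 4 * ε * |s - r| / c := by
      have h2 : u ≤ 2 * ε / l₀ := by
        rw [hudef]
        exact div_le_div_of_nonneg_left (by linarith) hl₀pos hll₀
      have h3 : 2 * ε / l₀ = 4 * ε * |s - r| / c := by
        rw [hl₀def, div_div_eq_mul_div]; ring
      linarith [h3 ▸ h2]
    -- final estimate for each b ∈ B
    have hfin : ∀ b ∈ B, p a₀ + (s - r) - ε * D ≤ p b := by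
      intro b hb
      have h4 : p b - p a₀ = p (b - z) + p (z - a₀) := by
        rw [map_sub, map_sub]; ring
      have h5 := hbz b hb
      have h6 : (1 - l) * (s - r - u) ≤ p (z - a₀) := by
        rw [hpza₀]
        exact mul_le_mul_of_nonneg_left hP (by linarith)
      have h7 : (1 - l) * (s - r - u) = (1 - l) * (s - r) - (1 - l) * u := by ring
      have h8 : (1 - l) * u ≤ u := by nlinarith
      have h9 : s - v - ε ≥ l * (s - r) - 2 * ε := by nlinarith
      have h10 : ε * D = 2 * ε + 4 * ε * |s - r| / c := by
        rw [hDdef]; ring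
      nlinarith
    -- conclude
    have hInfA : sInf (p '' A) ≤ p a₀ := csInf_le hbddA ⟨a₀, ha₀, rfl⟩
    have hInfB : p a₀ + (s - r) - δ ≤ sInf (p '' B) := by
      apply le_csInf (hBne.image p)
      rintro _ ⟨b, hb, rfl⟩
      have := hfin b hb
      linarith
    linarith
  -- pass to the limit δ → 0
  have := le_of_forall_pos_le_add key
  linarith
end

section
/- Let A, B be convex and bounded subsets of a Banach space X, r ≠ s reals, and ψ the concave function with hypograph co{A×(−∞,r], B×(−∞,s]}. If (x_n) is a sequence with ψ(x_n) → s, then d(x_n, B) → 0, where d denotes the distance to the set B. -/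
open Set

/-- Lemma: if `ψ(x_n) → s` then `d(x_n, B) → 0`. -/
theorem psi_tendsto_s_dist_B
    {X : Type*} [NormedAddCommGroup X] [NormedSpace ℝ X] [CompleteSpace X]
    (A B : Set X) (hA : Convex ℝ A) (hB : Convex ℝ B)
    (hAb : Bornology.IsBounded A) (hBb : Bornology.IsBounded B)
    (r s : ℝ) (hrs : r ≠ s)
    (ψ : X → EReal)
    (hψ : {q : X × ℝ | (q.2 : EReal) ≤ ψ q.1} =
      convexHull ℝ ((A ×ˢ Iic r) ∪ (B ×ˢ Iic s)))
    (x : ℕ → X)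
    (hx : Filter.Tendsto (fun n => ψ (x n)) Filter.atTop (nhds (s : EReal))) :
    Filter.Tendsto (fun n => Metric.infDist (x n) B) Filter.atTop (nhds 0) := by
  rcases B.eq_empty_or_nonempty with hBe | hBne
  · subst hBe
    simp only [Metric.infDist_empty]
    exact tendsto_const_nhds
  rcases A.eq_empty_or_nonempty with hAe | hAne
  · -- A is empty: the hull is just `B ×ˢ Iic s`
    subst hAe
    rw [Set.empty_prod, Set.empty_union,
      ((hB.prod (convex_Iic s)).convexHull_eq)] at hψ
    have h1 : ∀ᶠ n in Filter.atTop, ((s - 1 : ℝ) : EReal) < ψ (x n) :=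
      hx.eventually (eventually_gt_nhds (by exact_mod_cast sub_one_lt s))
    have h0 : ∀ᶠ n in Filter.atTop, Metric.infDist (x n) B = 0 := by
      filter_upwards [h1] with n hn
      have hm : ((x n, s - 1) : X × ℝ) ∈ {q : X × ℝ | (q.2 : EReal) ≤ ψ q.1} := hn.le
      rw [hψ] at hm
      exact Metric.infDist_zero_of_mem hm.1
    exact Filter.Tendsto.congr' (h0.mono fun n hn => hn.symm) tendsto_const_nhds
  -- main case
  obtain ⟨RA, hRA⟩ := hAb.subset_closedBall 0
  obtain ⟨RB, hRB⟩ := hBb.subset_closedBall 0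
  set C : ℝ := RA + RB with hCdef
  have hC : 0 ≤ C := by
    obtain ⟨u, hu⟩ := hAne
    obtain ⟨v, hv⟩ := hBne
    have h1 := hRA hu
    have h2 := hRB hv
    rw [Metric.mem_closedBall, dist_zero_right] at h1 h2
    have := norm_nonneg u
    have := norm_nonneg v
    linarith
  have hCB : ∀ u ∈ A, ∀ v ∈ B, ‖u - v‖ ≤ C := by
    intro u hu v hv
    have h1 := hRA hu
    have h2 := hRB hv
    rw [Metric.mem_closedBall, dist_zero_right] at h1 h2
    calc ‖u - v‖ ≤ ‖u‖ + ‖v‖ := norm_sub_le u v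
    _ ≤ C := by rw [hCdef]; linarith
  have habs : 0 < |r - s| := abs_pos.2 (sub_ne_zero.2 hrs)
  rw [Metric.tendsto_atTop]
  intro ε hε
  set δ : ℝ := ε * |r - s| / (C + 1) with hδdef
  have hδ : 0 < δ := by positivity
  have h1 : ∀ᶠ n in Filter.atTop, ((s - δ : ℝ) : EReal) < ψ (x n) :=
    hx.eventually (eventually_gt_nhds (by exact_mod_cast sub_lt_self s hδ))
  have h2 : ∀ᶠ n in Filter.atTop, ψ (x n) < ((s + δ : ℝ) : EReal) :=
    hx.eventually (eventually_lt_nhds (by exact_mod_cast lt_add_of_pos_right s hδ))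
  obtain ⟨N, hN⟩ := Filter.eventually_atTop.1 (h1.and h2)
  refine ⟨N, fun n hn => ?_⟩
  obtain ⟨hlo, hhi⟩ := hN n hn
  -- (x n, s - δ) is in the hypograph, hence in the convex hull
  have hm : ((x n, s - δ) : X × ℝ) ∈
      convexHull ℝ ((A ×ˢ Iic r) ∪ (B ×ˢ Iic s)) := by
    rw [← hψ]; exact hlo.le
  rw [Convex.convexHull_union (hA.prod (convex_Iic r)) (hB.prod (convex_Iic s))
    (hAne.prod Set.nonempty_Iic) (hBne.prod Set.nonempty_Iic), mem_convexJoin] at hm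
  obtain ⟨a, ha, b, hb, lam, mu, hlam, hmu, hsum, heq⟩ := hm
  obtain ⟨hu, hp⟩ := ha
  obtain ⟨hv, hq⟩ := hb
  have hx1 : lam • a.1 + mu • b.1 = x n := congrArg Prod.fst heq
  have hx2 : lam * a.2 + mu * b.2 = s - δ := congrArg Prod.snd heq
  have hp' : a.2 ≤ r := hp
  have hq' : b.2 ≤ s := hq
  -- the key point: ψ (x n) ≥ lam * r + mu * s
  have hkey : ((lam * r + mu * s : ℝ) : EReal) ≤ ψ (x n) := by
    have hmem : ((x n, lam * r + mu * s) : X × ℝ) ∈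
        convexHull ℝ ((A ×ˢ Iic r) ∪ (B ×ˢ Iic s)) := by
      have e1 : ((a.1, r) : X × ℝ) ∈ convexHull ℝ ((A ×ˢ Iic r) ∪ (B ×ˢ Iic s)) :=
        subset_convexHull ℝ _ (Or.inl ⟨hu, Set.mem_Iic.2 le_rfl⟩)
      have e2 : ((b.1, s) : X × ℝ) ∈ convexHull ℝ ((A ×ˢ Iic r) ∪ (B ×ˢ Iic s)) :=
        subset_convexHull ℝ _ (Or.inr ⟨hv, Set.mem_Iic.2 le_rfl⟩)
      have := (convex_convexHull ℝ ((A ×ˢ Iic r) ∪ (B ×ˢ Iic s))) e1 e2 hlam hmu hsum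
      convert this using 1
      ext
      · exact hx1.symm
      · simp [Prod.smul_def, smul_eq_mul]
    rw [← hψ] at hmem
    exact hmem
  -- bound lam * |r - s| ≤ δ
  have hmu1 : mu = 1 - lam := by linarith
  have h8 : mu * s = s - lam * s := by rw [hmu1]; ring
  have hlamb : lam * |r - s| ≤ δ := by
    rcases lt_or_gt_of_ne hrs with hlt | hgt
    · rw [abs_of_neg (by linarith : r - s < 0)]
      have h3 : lam * a.2 ≤ lam * r := mul_le_mul_of_nonneg_left hp' hlam
      have h4 : mu * b.2 ≤ mu * s := mul_le_mul_of_nonneg_left hq' hmu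
      linarith
    · rw [abs_of_pos (by linarith : 0 < r - s)]
      have h5 : ((lam * r + mu * s : ℝ) : EReal) < ((s + δ : ℝ) : EReal) :=
        lt_of_le_of_lt hkey hhi
      rw [EReal.coe_lt_coe_iff] at h5
      linarith
  -- now estimate the distance
  have hdist : Metric.infDist (x n) B ≤ lam * C := by
    have hle : Metric.infDist (x n) B ≤ dist (x n) b.1 :=
      Metric.infDist_le_dist_of_mem hv
    have hxv : x n - b.1 = lam • (a.1 - b.1) := by
      rw [← hx1]
      have hmu' : mu = 1 - lam := by linarith
      rw [hmu', smul_sub, sub_smul, one_smul]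
      abel
    rw [dist_eq_norm, hxv, norm_smul, Real.norm_eq_abs, abs_of_nonneg hlam] at hle
    calc Metric.infDist (x n) B ≤ lam * ‖a.1 - b.1‖ := hle
    _ ≤ lam * C := mul_le_mul_of_nonneg_left (hCB a.1 hu b.1 hv) hlam
  have hlam2 : lam ≤ ε / (C + 1) := by
    have : δ = ε / (C + 1) * |r - s| := by rw [hδdef]; ring
    rw [this] at hlamb
    exact le_of_mul_le_mul_right (by linarith [hlamb]) habs
  have hfin : lam * C < ε := by
    rcases eq_or_lt_of_le hlam with h0 | h0
    · simpa [← h0] using hε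
    · have h6 : lam * (C + 1) ≤ ε / (C + 1) * (C + 1) :=
        mul_le_mul_of_nonneg_right hlam2 (by linarith)
      rw [div_mul_cancel₀ _ (by linarith : C + 1 ≠ 0)] at h6
      nlinarith
  rw [Real.dist_eq, sub_zero, abs_of_nonneg Metric.infDist_nonneg]
  linarith
end

section
/- Let A, B be convex subsets of a Banach space X, r ≠ s reals, ψ with hypograph co{A×(−∞,r], B×(−∞,s]}, δ > 0, 0 < δ₁ < δ, μ ∈ ℝ with μ < min{r, s}, and set K = (max{r,s} − μ)/δ₁. Let φ_K be the sup-convolution of −K‖·‖ with ψ and let C be the closure of [A,B] + δB_X. Then φ_K(x) < μ for every x in the topological boundary of C. -/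
open Set Pointwise

/-- On the boundary of `C = closure([A,B] + δ B_X)` one has `φ_K < μ`, where
`K = (max{r,s} − μ)/δ₁` with `0 < δ₁ < δ` and `μ < min{r,s}`. -/
theorem phiK_lt_mu_on_frontier
    {X : Type*} [NormedAddCommGroup X] [NormedSpace ℝ X] [CompleteSpace X]
    (A B : Set X) (hA : Convex ℝ A) (hB : Convex ℝ B)
    (r s : ℝ) (hrs : r ≠ s)
    (ψ : X → EReal)
    (hψ : {q : X × ℝ | (q.2 : EReal) ≤ ψ q.1} =
      convexHull ℝ ((A ×ˢ Iic r) ∪ (B ×ˢ Iic s)))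
    (δ δ₁ μ : ℝ) (hδ₁ : 0 < δ₁) (hδ₁δ : δ₁ < δ) (hμ : μ < min r s)
    (K : ℝ) (hK : K = (max r s - μ) / δ₁)
    (φ : X → ℝ)
    (hφ : ∀ x, (φ x : EReal) = ⨆ y : X, ψ y - ((K * ‖x - y‖ : ℝ) : EReal))
    (C : Set X)
    (hC : C = closure (convexHull ℝ (A ∪ B) + δ • Metric.closedBall (0 : X) 1)) :
    ∀ x ∈ frontier C, φ x < μ := by
  intro x hx
  have hδpos : 0 < δ := hδ₁.trans hδ₁δ
  have hμmax : μ < max r s := lt_of_lt_of_le hμ (min_le_max)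
  have hKpos : 0 < K := by
    rw [hK]; exact div_pos (by linarith) hδ₁
  -- hull containment
  have hhull : convexHull ℝ ((A ×ˢ Iic r) ∪ (B ×ˢ Iic s)) ⊆
      (convexHull ℝ (A ∪ B)) ×ˢ Iic (max r s) := by
    apply convexHull_min
    · rintro ⟨y, t⟩ (⟨hy, ht⟩ | ⟨hy, ht⟩)
      · exact ⟨subset_convexHull ℝ _ (Or.inl hy), le_trans ht (le_max_left r s)⟩
      · exact ⟨subset_convexHull ℝ _ (Or.inr hy), le_trans ht (le_max_right r s)⟩
    · exact (convex_convexHull ℝ _).prod (convex_Iic _)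
  have hmem : ∀ (y : X) (t : ℝ), (t : EReal) ≤ ψ y →
      y ∈ convexHull ℝ (A ∪ B) ∧ t ≤ max r s := by
    intro y t ht
    have h1 : (y, t) ∈ {q : X × ℝ | (q.2 : EReal) ≤ ψ q.1} := ht
    rw [hψ] at h1
    exact hhull h1
  -- ψ is bounded above by max r s
  have hψle : ∀ y, ψ y ≤ ((max r s : ℝ) : EReal) := by
    intro y
    by_contra h
    push_neg at h
    obtain ⟨z, hz1, hz2⟩ := exists_between h
    lift z to ℝ using ⟨hz2.ne_top, hz1.ne_bot⟩
    have h2 := (hmem y z hz2.le).2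
    have h3 : (max r s : ℝ) < z := by exact_mod_cast hz1
    linarith
  -- points with ψ y ≠ ⊥ are in the hull
  have hin : ∀ y, ψ y ≠ ⊥ → y ∈ convexHull ℝ (A ∪ B) := by
    intro y hy
    obtain ⟨z, hz1, hz2⟩ := exists_between (bot_lt_iff_ne_bot.mpr hy)
    have hzt : z ≠ ⊤ := by
      intro hzt
      rw [hzt] at hz2
      exact not_top_lt hz2
    lift z to ℝ using ⟨hzt, hz1.ne_bot⟩
    exact (hmem y z hz2.le).1
  -- boundary points are at distance ≥ δ from the hull
  have hdist : ∀ y ∈ convexHull ℝ (A ∪ B), δ ≤ ‖x - y‖ := by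
    intro y hy
    by_contra h
    push_neg at h
    have hxint : x ∈ interior C := by
      rw [mem_interior]
      refine ⟨Metric.ball y δ, ?_, Metric.isOpen_ball, ?_⟩
      · rw [hC]
        intro z hz
        apply subset_closure
        refine Set.mem_add.mpr ⟨y, hy, z - y, ?_, by abel⟩
        rw [smul_closedBall _ _ zero_le_one, smul_zero, mul_one,
          Real.norm_eq_abs, abs_of_pos hδpos]
        rw [Metric.mem_closedBall, dist_zero_right]
        have : dist z y < δ := hz
        rw [dist_eq_norm] at this
        exact this.le
      · rw [Metric.mem_ball, dist_eq_norm]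
        exact h
    exact hx.2 hxint
  -- each term in the sup is ≤ max r s − K δ
  have hterm : ∀ y : X, ψ y - ((K * ‖x - y‖ : ℝ) : EReal) ≤
      ((max r s - K * δ : ℝ) : EReal) := by
    intro y
    rcases eq_or_ne (ψ y) ⊥ with hb | hb
    · rw [hb, EReal.bot_sub]
      exact bot_le
    · have h2 : ((K * δ : ℝ) : EReal) ≤ ((K * ‖x - y‖ : ℝ) : EReal) := by
        exact_mod_cast mul_le_mul_of_nonneg_left (hdist y (hin y hb)) hKpos.le
      calc ψ y - ((K * ‖x - y‖ : ℝ) : EReal)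
          ≤ ((max r s : ℝ) : EReal) - ((K * δ : ℝ) : EReal) :=
            EReal.sub_le_sub (hψle y) h2
        _ = ((max r s - K * δ : ℝ) : EReal) := by norm_cast
  have hsup : (φ x : EReal) ≤ ((max r s - K * δ : ℝ) : EReal) := by
    rw [hφ x]
    exact iSup_le hterm
  have hle : φ x ≤ max r s - K * δ := by exact_mod_cast hsup
  have hKδ₁ : K * δ₁ = max r s - μ := by
    rw [hK]; field_simp
  have hlt : K * δ₁ < K * δ := by
    exact mul_lt_mul_of_pos_left hδ₁δ hKpos
  linarith
end
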